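/- Let C be a binary linear [k+t, k] code with systematic generator matrix G = [I_k | A]. Then M(C) ≤ (k+1)k/2 + Σ_{s=2}^{t+1} C(2^t − 1, s) · (k/(2^t − 1))^s, where the right-hand side is a real number and C(·,·) denotes the binomial coefficient. -/

import Mathlib

open Finset

/-- The support of a vector `x ∈ F_2^n`: the set of nonzero coordinates. -/
def supp {n : ℕ} (x : Fin n → ZMod 2) : Set (Fin n) := {i | x i ≠ 0}

/-- `c` is a minimal codeword of the linear code (subspace) `C ≤ F_2^n`:
it is a nonzero codeword and no nonzero codeword has support properly contained in `supp c`. -/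
def IsMinimal {n : ℕ} (C : Submodule (ZMod 2) (Fin n → ZMod 2)) (c : Fin n → ZMod 2) : Prop :=
  c ∈ C ∧ c ≠ 0 ∧ ∀ c' ∈ C, c' ≠ 0 → ¬ supp c' ⊂ supp c

/-- `M(C)`: the number of minimal codewords of `C`. -/
noncomputable def Mcode {n : ℕ} (C : Submodule (ZMod 2) (Fin n → ZMod 2)) : ℕ :=
  Set.ncard {c | IsMinimal C c}

/-- The `i`-th row `g^i` of the systematic generator matrix `G = [I_k | A]`. -/
def row {k t : ℕ} (A : Fin k → Fin t → ZMod 2) (i : Fin k) : Fin (k + t) → ZMod 2 :=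
  Fin.append (Pi.single i 1) (A i)

/-- The binary linear `[k+t, k]` code with systematic generator matrix `G = [I_k | A]`. -/
def genCode {k t : ℕ} (A : Fin k → Fin t → ZMod 2) :
    Submodule (ZMod 2) (Fin (k + t) → ZMod 2) :=
  Submodule.span (ZMod 2) (Set.range (row A))

/-- `c^S = ∑_{i ∈ S} g^i`. -/
def cS {k t : ℕ} (A : Fin k → Fin t → ZMod 2) (S : Finset (Fin k)) : Fin (k + t) → ZMod 2 :=
  ∑ i ∈ S, row A i

/-- `c_I`: the restriction of a codeword to its last `t` coordinates (the information bits). -/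
def infoBits {k t : ℕ} (c : Fin (k + t) → ZMod 2) : Fin t → ZMod 2 :=
  fun j => c (Fin.natAdd k j)

/-- `a_τ(A)` : the number of indices `i` with `g^i_I = A i = τ`. -/
def aCount {k t : ℕ} (A : Fin k → Fin t → ZMod 2) (τ : Fin t → ZMod 2) : ℕ :=
  (Finset.univ.filter fun i => A i = τ).card

/-- `M_2(n, k)`: the maximum of `M(C)` over all binary linear `[n, k]` codes `C`. -/
noncomputable def M2 (n k : ℕ) : ℕ :=
  sSup {m | ∃ C : Submodule (ZMod 2) (Fin n → ZMod 2),
    Module.finrank (ZMod 2) C = k ∧ Mcode C = m}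



section Maclaurin

open Finset
set_option linter.unusedSectionVars false

variable {ι : Type*} [DecidableEq ι]

/-- Reindexing: choosing a `(p+q)`-set `U ⊆ B` and a `p`-subset `P ⊆ U` is the same as
choosing a `p`-set `P ⊆ B` and a `q`-set `Q ⊆ B \ P`. -/
lemma sum_pc_split (B : Finset ι) (p q : ℕ) (f : Finset ι → Finset ι → ℝ) :
    ∑ U ∈ B.powersetCard (p + q), ∑ P ∈ U.powersetCard p, f P (U \ P)
      = ∑ P ∈ B.powersetCard p, ∑ Q ∈ (B \ P).powersetCard q, f P Q := by
  rw [Finset.sum_sigma', Finset.sum_sigma']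
  refine Finset.sum_nbij' (fun x => ⟨x.2, x.1 \ x.2⟩) (fun x => ⟨x.1 ∪ x.2, x.1⟩) ?_ ?_ ?_ ?_ ?_
  · rintro ⟨U, P⟩ hx
    simp only [Finset.mem_sigma, Finset.mem_powersetCard] at hx ⊢
    obtain ⟨⟨hUB, hUc⟩, hPU, hPc⟩ := hx
    refine ⟨⟨hPU.trans hUB, hPc⟩, Finset.sdiff_subset_sdiff hUB (le_refl P), ?_⟩
    rw [Finset.card_sdiff_of_subset hPU, hUc, hPc]; omega
  · rintro ⟨P, Q⟩ hx
    simp only [Finset.mem_sigma, Finset.mem_powersetCard] at hx ⊢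
    obtain ⟨⟨hPB, hPc⟩, hQB, hQc⟩ := hx
    have hdisj : Disjoint P Q := Finset.disjoint_of_subset_right hQB disjoint_sdiff
    refine ⟨⟨Finset.union_subset hPB (hQB.trans (Finset.sdiff_subset)), ?_⟩,
      Finset.subset_union_left, hPc⟩
    rw [Finset.card_union_of_disjoint hdisj, hPc, hQc]
  · rintro ⟨U, P⟩ hx
    simp only [Finset.mem_sigma, Finset.mem_powersetCard] at hx
    obtain ⟨⟨hUB, hUc⟩, hPU, hPc⟩ := hx
    simp only [Sigma.mk.inj_iff, heq_eq_eq]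
    exact ⟨Finset.union_sdiff_of_subset hPU, trivial⟩
  · rintro ⟨P, Q⟩ hx
    simp only [Finset.mem_sigma, Finset.mem_powersetCard] at hx
    obtain ⟨⟨hPB, hPc⟩, hQB, hQc⟩ := hx
    have hdisj : Disjoint P Q := Finset.disjoint_of_subset_right hQB disjoint_sdiff
    simp only [Sigma.mk.inj_iff, heq_eq_eq]
    exact ⟨trivial, Finset.union_sdiff_cancel_left hdisj⟩
  · rintro ⟨U, P⟩ _; rfl

/-- Complement bijection within a fixed finset. -/
lemma sum_pc_compl (U : Finset ι) (r : ℕ) (hr : r ≤ U.card) (h : Finset ι → Finset ι → ℝ) :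
    ∑ R ∈ U.powersetCard r, h R (U \ R)
      = ∑ P ∈ U.powersetCard (U.card - r), h (U \ P) P := by
  refine Finset.sum_nbij' (fun R => U \ R) (fun P => U \ P) ?_ ?_ ?_ ?_ ?_
  · intro R hR
    simp only [Finset.mem_powersetCard] at hR ⊢
    exact ⟨Finset.sdiff_subset, by rw [Finset.card_sdiff_of_subset hR.1, hR.2]⟩
  · intro P hP
    simp only [Finset.mem_powersetCard] at hP ⊢
    refine ⟨Finset.sdiff_subset, ?_⟩
    rw [Finset.card_sdiff_of_subset hP.1, hP.2]
    omega
  · intro R hR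
    simp only [Finset.mem_powersetCard] at hR
    exact Finset.sdiff_sdiff_eq_self hR.1
  · intro P hP
    simp only [Finset.mem_powersetCard] at hP
    exact Finset.sdiff_sdiff_eq_self hP.1
  · intro R hR
    simp only [Finset.mem_powersetCard] at hR
    rw [Finset.sdiff_sdiff_eq_self hR.1]

/-- Elementary symmetric function of `a` over `B`. -/
noncomputable def esym (B : Finset ι) (a : ι → ℝ) (r : ℕ) : ℝ :=
  ∑ T ∈ B.powersetCard r, ∏ i ∈ T, a i

lemma esym_nonneg {B : Finset ι} {a : ι → ℝ} (ha : ∀ i ∈ B, 0 ≤ a i) (r : ℕ) :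
    0 ≤ esym B a r := by
  refine Finset.sum_nonneg fun T hT => Finset.prod_nonneg fun i hi => ?_
  exact ha i ((Finset.mem_powersetCard.1 hT).1 hi)

lemma esym_zero (B : Finset ι) (a : ι → ℝ) : esym B a 0 = 1 := by
  simp [esym, Finset.powersetCard_zero]

lemma esym_one (B : Finset ι) (a : ι → ℝ) : esym B a 1 = ∑ i ∈ B, a i := by
  rw [esym, Finset.powersetCard_one, Finset.sum_map]
  simp

lemma esym_gt (B : Finset ι) (a : ι → ℝ) {r : ℕ} (h : B.card < r) : esym B a r = 0 := by
  rw [esym, Finset.powersetCard_eq_empty.2 h, Finset.sum_empty]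

lemma esym_insert {x : ι} {X : Finset ι} (hx : x ∉ X) (a : ι → ℝ) (n : ℕ) :
    esym (insert x X) a (n + 1) = esym X a (n + 1) + a x * esym X a n := by
  rw [esym, Finset.powersetCard_succ_insert hx, Finset.sum_union, Finset.sum_image]
  · rw [esym, esym, Finset.mul_sum]
    congr 1
    refine Finset.sum_congr rfl fun T hT => ?_
    have hxT : x ∉ T := fun h =>
      hx ((Finset.mem_powersetCard.1 hT).1 h)
    rw [Finset.prod_insert hxT]
  · intro T hT T' hT' hTT'
    have hxT : x ∉ T := fun h => hx ((Finset.mem_powersetCard.1 hT).1 h)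
    have hxT' : x ∉ T' := fun h => hx ((Finset.mem_powersetCard.1 hT').1 h)
    have := congrArg (Finset.erase · x) hTT'
    simpa [Finset.erase_insert hxT, Finset.erase_insert hxT'] using this
  · rw [Finset.disjoint_left]
    intro T hT hT2
    obtain ⟨T', hT', rfl⟩ := Finset.mem_image.1 hT2
    exact hx ((Finset.mem_powersetCard.1 hT).1 (Finset.mem_insert_self x T'))

lemma sq_sum_eq_esym (X : Finset ι) (a : ι → ℝ) :
    (∑ i ∈ X, a i) ^ 2 = ∑ i ∈ X, a i ^ 2 + 2 * esym X a 2 := by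
  induction X using Finset.induction_on with
  | empty => simp [esym_gt _ _ (show (∅ : Finset ι).card < 2 by simp)]
  | insert x X hx ih =>
    rw [Finset.sum_insert hx, Finset.sum_insert hx, esym_insert hx, esym_one]
    ring_nf
    ring_nf at ih
    linarith [ih]

/-- Cauchy–Schwarz-ish: `2 e_2(X) ≤ (|X| - 1) ∑ a_i²`. -/
lemma two_esym_two_le (X : Finset ι) (a : ι → ℝ) :
    2 * esym X a 2 ≤ ((X.card : ℝ) - 1) * ∑ i ∈ X, a i ^ 2 := by
  have h1 := sq_sum_le_card_mul_sum_sq (s := X) (f := a)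
  have h2 := sq_sum_eq_esym X a
  have h3 : (0:ℝ) ≤ ∑ i ∈ X, a i ^ 2 := Finset.sum_nonneg fun i _ => sq_nonneg _
  nlinarith [h1, h2]

lemma sum_pc_one (X : Finset ι) (g : Finset ι → ℝ) :
    ∑ Q ∈ X.powersetCard 1, g Q = ∑ i ∈ X, g {i} := by
  rw [Finset.powersetCard_one, Finset.sum_map]; rfl

/-- Newton-step identity I1. -/
lemma esym_one_mul (B : Finset ι) (a : ι → ℝ) (m : ℕ) :
    esym B a 1 * esym B a (m + 1)
      = (m + 2 : ℝ) * esym B a (m + 2)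
        + ∑ T ∈ B.powersetCard (m + 1), (∑ i ∈ T, a i) * ∏ i ∈ T, a i := by
  have key : ∀ T ∈ B.powersetCard (m + 1),
      (∑ i ∈ B, a i) * ∏ i ∈ T, a i
        = (∑ i ∈ T, a i) * ∏ i ∈ T, a i + ∑ Q ∈ (B \ T).powersetCard 1,
            (∏ i ∈ T, a i) * ∏ i ∈ Q, a i := by
    intro T hT
    have hTB : T ⊆ B := (Finset.mem_powersetCard.1 hT).1
    rw [sum_pc_one]
    simp only [Finset.prod_singleton]
    rw [← Finset.mul_sum, ← Finset.sum_sdiff hTB (f := a)]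
    ring
  rw [esym_one, esym, Finset.mul_sum, Finset.sum_congr rfl key, Finset.sum_add_distrib]
  have split := sum_pc_split B (m+1) 1 (fun P Q => (∏ i ∈ P, a i) * ∏ i ∈ Q, a i)
  rw [← split]
  have inner : ∀ U ∈ B.powersetCard (m + 1 + 1),
      ∑ P ∈ U.powersetCard (m+1), (∏ i ∈ P, a i) * ∏ i ∈ U \ P, a i
        = (m + 2 : ℝ) * ∏ i ∈ U, a i := by
    intro U hU
    have hUc : U.card = m + 2 := (Finset.mem_powersetCard.1 hU).2
    have : ∀ P ∈ U.powersetCard (m+1),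
        (∏ i ∈ P, a i) * ∏ i ∈ U \ P, a i = ∏ i ∈ U, a i := by
      intro P hP
      rw [mul_comm, Finset.prod_sdiff (Finset.mem_powersetCard.1 hP).1]
    rw [Finset.sum_congr rfl this, Finset.sum_const, Finset.card_powersetCard, hUc,
      Nat.choose_succ_self_right, nsmul_eq_mul]
    push_cast; ring
  rw [Finset.sum_congr rfl inner, ← Finset.mul_sum, esym]
  ring

/-- I2: regrouping `D`. -/
lemma D_eq (B : Finset ι) (a : ι → ℝ) (m : ℕ) :
    ∑ T ∈ B.powersetCard (m + 1), (∑ i ∈ T, a i) * ∏ i ∈ T, a i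
      = ∑ R ∈ B.powersetCard m, (∏ i ∈ R, a i) * ∑ i ∈ B \ R, a i ^ 2 := by
  have step1 : ∀ T ∈ B.powersetCard (m + 1),
      (∑ i ∈ T, a i) * ∏ i ∈ T, a i
        = ∑ R ∈ T.powersetCard m, (∏ i ∈ R, a i) * ∏ i ∈ T \ R, a i ^ 2 := by
    intro T hT
    have hTc : T.card = m + 1 := (Finset.mem_powersetCard.1 hT).2
    have compl := sum_pc_compl T 1 (by omega)
      (fun P Q => (∏ i ∈ Q, a i) * ∏ i ∈ P, a i ^ 2)
    rw [hTc] at compl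
    simp only [Nat.add_sub_cancel] at compl
    rw [← compl, sum_pc_one, Finset.sum_mul]
    refine Finset.sum_congr rfl fun i hi => ?_
    rw [Finset.prod_singleton, sdiff_singleton_eq_erase]
    rw [← Finset.mul_prod_erase T a hi]
    ring
  rw [Finset.sum_congr rfl step1]
  have split := sum_pc_split B m 1 (fun R Q => (∏ i ∈ R, a i) * ∏ i ∈ Q, a i ^ 2)
  rw [split]
  refine Finset.sum_congr rfl fun R hR => ?_
  rw [sum_pc_one, Finset.mul_sum]
  simp

/-- I3: regrouping `e_{m+2}`. -/
lemma esym_eq_regroup (B : Finset ι) (a : ι → ℝ) (m : ℕ) :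
    ((m+2).choose 2 : ℝ) * esym B a (m + 2)
      = ∑ R ∈ B.powersetCard m, (∏ i ∈ R, a i) * ∑ T ∈ (B \ R).powersetCard 2, ∏ i ∈ T, a i := by
  have split := sum_pc_split B m 2 (fun R Q => (∏ i ∈ R, a i) * ∏ i ∈ Q, a i)
  have inner : ∀ U ∈ B.powersetCard (m + 2),
      ∑ R ∈ U.powersetCard m, (∏ i ∈ R, a i) * ∏ i ∈ U \ R, a i
        = ((m+2).choose 2 : ℝ) * ∏ i ∈ U, a i := by
    intro U hU
    have hUc : U.card = m + 2 := (Finset.mem_powersetCard.1 hU).2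
    have : ∀ R ∈ U.powersetCard m,
        (∏ i ∈ R, a i) * ∏ i ∈ U \ R, a i = ∏ i ∈ U, a i := by
      intro R hR
      rw [mul_comm, Finset.prod_sdiff (Finset.mem_powersetCard.1 hR).1]
    rw [Finset.sum_congr rfl this, Finset.sum_const, Finset.card_powersetCard, hUc,
      nsmul_eq_mul]
    congr 2
    rw [← Nat.choose_symm (by omega : 2 ≤ m + 2)]
    congr 1
  rw [esym, Finset.mul_sum, ← Finset.sum_congr rfl inner, split]
  refine Finset.sum_congr rfl fun R hR => ?_
  rw [Finset.mul_sum]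

/-- Newton-type inequality. -/
lemma newton (B : Finset ι) (a : ι → ℝ) (ha : ∀ i ∈ B, 0 ≤ a i) (m : ℕ)
    (hm : m + 2 ≤ B.card) :
    ((m:ℝ) + 2) * B.card * esym B a (m + 2)
      ≤ ((B.card : ℝ) - (m + 1)) * (esym B a 1 * esym B a (m + 1)) := by
  set N := B.card with hN
  -- pointwise bound on complements
  have key : ∀ R ∈ B.powersetCard m,
      2 * ((∏ i ∈ R, a i) * ∑ T ∈ (B \ R).powersetCard 2, ∏ i ∈ T, a i)
        ≤ ((N:ℝ) - m - 1) * ((∏ i ∈ R, a i) * ∑ i ∈ B \ R, a i ^ 2) := by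
    intro R hR
    obtain ⟨hRB, hRc⟩ := Finset.mem_powersetCard.1 hR
    have hcard : (B \ R).card = N - m := by rw [Finset.card_sdiff_of_subset hRB, hRc]
    have hprod : 0 ≤ ∏ i ∈ R, a i := Finset.prod_nonneg fun i hi => ha i (hRB hi)
    have h2 := two_esym_two_le (B \ R) a
    rw [esym] at h2
    rw [hcard] at h2
    have hcast : ((N - m : ℕ) : ℝ) = (N:ℝ) - m := by
      rw [Nat.cast_sub (by omega)]
    rw [hcast] at h2
    calc 2 * ((∏ i ∈ R, a i) * ∑ T ∈ (B \ R).powersetCard 2, ∏ i ∈ T, a i)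
        = (∏ i ∈ R, a i) * (2 * ∑ T ∈ (B \ R).powersetCard 2, ∏ i ∈ T, a i) := by ring
      _ ≤ (∏ i ∈ R, a i) * (((N:ℝ) - m - 1) * ∑ i ∈ B \ R, a i ^ 2) := by
          apply mul_le_mul_of_nonneg_left _ hprod
          convert h2 using 2
      _ = ((N:ℝ) - m - 1) * ((∏ i ∈ R, a i) * ∑ i ∈ B \ R, a i ^ 2) := by ring
  have sum_key := Finset.sum_le_sum key
  rw [← Finset.mul_sum, ← Finset.mul_sum, ← esym_eq_regroup, ← D_eq] at sum_key
  have I1 := esym_one_mul B a m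
  have hch : ((m+2).choose 2 : ℝ) = ((m:ℝ)+2) * ((m:ℝ)+1) / 2 := by
    rw [Nat.cast_choose_two]
    push_cast
    ring
  rw [hch] at sum_key
  have hD : 0 ≤ ∑ T ∈ B.powersetCard (m + 1), (∑ i ∈ T, a i) * ∏ i ∈ T, a i := by
    refine Finset.sum_nonneg fun T hT => ?_
    have hTB : T ⊆ B := (Finset.mem_powersetCard.1 hT).1
    exact mul_nonneg (Finset.sum_nonneg fun i hi => ha i (hTB hi))
      (Finset.prod_nonneg fun i hi => ha i (hTB hi))
  have hE : 0 ≤ esym B a (m+2) := esym_nonneg ha _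
  nlinarith [sum_key, I1, hD, hE]

lemma maclaurin_aux (B : Finset ι) (a : ι → ℝ) (ha : ∀ i ∈ B, 0 ≤ a i) :
    ∀ s : ℕ, esym B a s ≤ (B.card.choose s : ℝ) * (esym B a 1 / B.card) ^ s := by
  have he1 : 0 ≤ esym B a 1 := esym_nonneg ha 1
  have hratio : 0 ≤ esym B a 1 / B.card := div_nonneg he1 (Nat.cast_nonneg _)
  intro s
  induction s with
  | zero => simp [esym_zero]
  | succ m ih =>
    match m, ih with
    | 0, _ =>
      rcases Nat.eq_zero_or_pos B.card with h0 | hpos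
      · have hB : B = ∅ := Finset.card_eq_zero.1 h0
        subst hB
        rw [esym_gt _ _ (by simp)]
        simp
      · have hN : (0:ℝ) < B.card := by exact_mod_cast hpos
        rw [pow_one, Nat.choose_one_right]
        rw [mul_div_assoc']
        rw [mul_comm]
        rw [mul_div_assoc]
        rw [div_self (ne_of_gt hN), mul_one]
    | m + 1, ih =>
      rcases lt_or_ge B.card (m + 2) with hlt | hge
      · rw [esym_gt B a hlt, Nat.choose_eq_zero_of_lt hlt]
        simp
    -- main case
      · set N := B.card with hN
        have hNpos : (0:ℝ) < (N:ℝ) := by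
          have : 0 < N := by omega
          exact_mod_cast this
        have hnewton := newton B a ha m hge
        have hm1 : 0 ≤ esym B a (m+1) := esym_nonneg ha _
        have hsub : (0:ℝ) ≤ (N:ℝ) - (m+1) := by
          have : (m+1 : ℝ) ≤ N := by exact_mod_cast (by omega : m+1 ≤ N)
          linarith
        have step1 : ((N:ℝ) - (m+1)) * (esym B a 1 * esym B a (m+1))
            ≤ ((N:ℝ) - (m+1)) * (esym B a 1 * ((N.choose (m+1) : ℝ) * (esym B a 1 / N) ^ (m+1))) := by
          apply mul_le_mul_of_nonneg_left _ hsub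
          exact mul_le_mul_of_nonneg_left ih he1
        have hid : ((N:ℝ) - (m+1)) * (N.choose (m+1) : ℝ) = ((m:ℝ)+2) * (N.choose (m+2) : ℝ) := by
          have h := Nat.choose_succ_right_eq N (m+1)
          have : (N.choose (m+2) * (m+2) : ℝ) = (N.choose (m+1) : ℝ) * ((N:ℝ) - (m+1)) := by
            rw [show ((N.choose (m+2) * (m+2) : ℝ)) = ((N.choose (m+1+1) * (m+1+1) : ℕ) : ℝ) by push_cast; ring,
              h]
            rw [Nat.cast_mul, Nat.cast_sub (by omega : m+1 ≤ N)]
            push_cast; ring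
          linarith
        have step2 : ((N:ℝ) - (m+1)) * (esym B a 1 * ((N.choose (m+1) : ℝ) * (esym B a 1 / N) ^ (m+1)))
            = ((m:ℝ)+2) * (N:ℝ) * ((N.choose (m+2) : ℝ) * (esym B a 1 / N) ^ (m+2)) := by
          have hpow : (esym B a 1 / N) ^ (m+2) = (esym B a 1 / N) ^ (m+1) * (esym B a 1 / N) := by
            rw [pow_succ]
          rw [hpow]
          have : (N:ℝ) * (esym B a 1 / N) = esym B a 1 := by field_simp
          linear_combination (esym B a 1 * (esym B a 1 / (N:ℝ)) ^ (m+1)) * hid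
            - (((m:ℝ)+2) * (N.choose (m+2):ℝ) * (esym B a 1 / N)^(m+1)) * this
        have final : ((m:ℝ)+2) * (N:ℝ) * esym B a (m+2)
            ≤ ((m:ℝ)+2) * (N:ℝ) * ((N.choose (m+2) : ℝ) * (esym B a 1 / N) ^ (m+2)) := by
          rw [← step2]
          exact le_trans hnewton step1
        have hposmul : (0:ℝ) < ((m:ℝ)+2) * (N:ℝ) := by positivity
        exact le_of_mul_le_mul_left (by simpa [mul_assoc] using final) hposmul

/-- Maclaurin-type bound with an upper bound `K` on the sum. -/
lemma maclaurin (B : Finset ι) (a : ι → ℝ) (ha : ∀ i ∈ B, 0 ≤ a i)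
    (K : ℝ) (hK : ∑ i ∈ B, a i ≤ K) (s : ℕ) :
    esym B a s ≤ (B.card.choose s : ℝ) * (K / B.card) ^ s := by
  have he1 : 0 ≤ esym B a 1 := esym_nonneg ha 1
  have he1K : esym B a 1 ≤ K := by rw [esym_one]; exact hK
  refine le_trans (maclaurin_aux B a ha s) ?_
  apply mul_le_mul_of_nonneg_left _ (Nat.cast_nonneg _)
  apply pow_le_pow_left₀ (div_nonneg he1 (Nat.cast_nonneg _))
  exact div_le_div_of_nonneg_right he1K (Nat.cast_nonneg _)

end Maclaurin

section Coding

variable {k t : ℕ} (A : Fin k → Fin t → ZMod 2)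

lemma zmod2_cases : ∀ z : ZMod 2, z = 0 ∨ z = 1 := by decide

lemma zmod2_ne_zero {z : ZMod 2} (h : z ≠ 0) : z = 1 := by
  rcases zmod2_cases z with h0 | h1
  · exact absurd h0 h
  · exact h1

lemma cS_apply_castAdd (S : Finset (Fin k)) (i : Fin k) :
    cS A S (Fin.castAdd t i) = if i ∈ S then 1 else 0 := by
  simp only [cS, Finset.sum_apply, row, Fin.append_left, Pi.single_apply]
  rw [Finset.sum_ite_eq S i (fun _ => (1 : ZMod 2))]

lemma cS_apply_natAdd (S : Finset (Fin k)) (j : Fin t) :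
    cS A S (Fin.natAdd k j) = ∑ i ∈ S, A i j := by
  simp only [cS, Finset.sum_apply, row, Fin.append_right]

lemma cS_injective : Function.Injective (cS A) := by
  intro S S' h
  ext i
  have := congrFun h (Fin.castAdd t i)
  rw [cS_apply_castAdd, cS_apply_castAdd] at this
  by_cases hi : i ∈ S <;> by_cases hi' : i ∈ S' <;> simp_all

lemma cS_mem (S : Finset (Fin k)) : cS A S ∈ genCode A := by
  refine Submodule.sum_mem _ fun i _ => Submodule.subset_span ⟨i, rfl⟩

lemma cS_eq_zero_iff (S : Finset (Fin k)) : cS A S = 0 ↔ S = ∅ := by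
  constructor
  · intro h
    by_contra hne
    obtain ⟨i, hi⟩ := Finset.nonempty_iff_ne_empty.2 hne
    have := congrFun h (Fin.castAdd t i)
    rw [cS_apply_castAdd, if_pos hi] at this
    exact one_ne_zero this
  · rintro rfl; simp [cS]

lemma mem_genCode_iff (c : Fin (k + t) → ZMod 2) :
    c ∈ genCode A ↔ ∃ S : Finset (Fin k), c = cS A S := by
  constructor
  · intro hc
    rw [genCode, Submodule.mem_span_range_iff_exists_fun] at hc
    obtain ⟨g, hg⟩ := hc
    refine ⟨Finset.univ.filter (fun i => g i = 1), ?_⟩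
    rw [← hg, cS, Finset.sum_filter]
    refine Finset.sum_congr rfl fun i _ => ?_
    rcases zmod2_cases (g i) with h | h <;> simp [h]
  · rintro ⟨S, rfl⟩; exact cS_mem A S

lemma mem_supp_cS_castAdd {S : Finset (Fin k)} {i : Fin k} :
    (Fin.castAdd t i : Fin (k + t)) ∈ supp (cS A S) ↔ i ∈ S := by
  simp only [supp, Set.mem_setOf_eq, cS_apply_castAdd]
  by_cases hi : i ∈ S <;> simp [hi]

/-- The rank argument: a minimal codeword `c^S` has `|S| ≤ t + 1`. -/
lemma minimal_card_le {S : Finset (Fin k)} (h : IsMinimal (genCode A) (cS A S)) :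
    S.card ≤ t + 1 := by
  classical
  set ψ : ((↥S : Type) → ZMod 2) →ₗ[ZMod 2] (Fin t → ZMod 2) :=
    { toFun := fun x => ∑ i : ↥S, x i • A i.1
      map_add' := by
        intro x y
        simp only [Pi.add_apply, add_smul]
        rw [Finset.sum_add_distrib]
      map_smul' := by
        intro c x
        simp only [Pi.smul_apply, smul_eq_mul, RingHom.id_apply, Finset.smul_sum, mul_smul] } with hψ
  -- every nonzero kernel element is the all-ones vector
  have hker : ∀ x ∈ LinearMap.ker ψ, x ≠ 0 → x = fun _ => (1 : ZMod 2) := by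
    intro x hx hx0
    have hψx : ∑ i : ↥S, x i • A i.1 = 0 := hx
    set S' : Finset (Fin k) := (S.attach.filter fun i => x i ≠ 0).image Subtype.val with hS'
    have hS'S : S' ⊆ S := by
      intro i hi
      simp only [hS', Finset.mem_image, Finset.mem_filter, Finset.mem_attach, true_and] at hi
      obtain ⟨⟨i', hi'⟩, _, rfl⟩ := hi
      exact hi'
    have hmem : ∀ i : ↥S, i.1 ∈ S' ↔ x i ≠ 0 := by
      intro i
      simp only [hS', Finset.mem_image, Finset.mem_filter, Finset.mem_attach, true_and]
      constructor
      · rintro ⟨i', hi', hval⟩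
        cases Subtype.ext hval
        exact hi'
      · intro hxi; exact ⟨i, hxi, rfl⟩
    -- c^{S'} is a nonzero codeword
    have hne : cS A S' ≠ 0 := by
      rw [Ne, cS_eq_zero_iff]
      intro hempty
      apply hx0
      funext i
      by_contra hxi
      have : i.1 ∈ S' := (hmem i).2 hxi
      rw [hempty] at this
      exact absurd this (Finset.notMem_empty _)
    -- its support is contained in that of c^S
    have hinfo : ∀ j : Fin t, cS A S' (Fin.natAdd k j) = 0 := by
      intro j
      rw [cS_apply_natAdd]
      have e1 : ∑ i ∈ S', A i j = ∑ i ∈ S.attach.filter (fun i => x i ≠ 0), A i.1 j := by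
        rw [hS', Finset.sum_image]
        intro a _ b _ hab
        exact Subtype.ext hab
      have e2 : ∑ i ∈ S.attach.filter (fun i => x i ≠ 0), A i.1 j
          = ∑ i ∈ S.attach, x i * A i.1 j := by
        rw [Finset.sum_filter]
        refine Finset.sum_congr rfl fun i _ => ?_
        rcases zmod2_cases (x i) with h | h <;> simp [h]
      have e3 : ∑ i ∈ S.attach, x i * A i.1 j = (∑ i : ↥S, x i • A i.1) j := by
        rw [Finset.sum_apply]
        rw [← Finset.univ_eq_attach]
        refine Finset.sum_congr rfl fun i _ => ?_
        simp
      rw [e1, e2, e3, hψx]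
      rfl
    have hsub : supp (cS A S') ⊆ supp (cS A S) := by
      intro y hy
      refine Fin.addCases (motive := fun y => y ∈ supp (cS A S') → y ∈ supp (cS A S)) ?_ ?_ y hy
      · intro i hi
        rw [mem_supp_cS_castAdd] at hi ⊢
        exact hS'S hi
      · intro j hj
        exact absurd (hinfo j) hj
    -- minimality forces equality of supports, hence S' = S
    have hnss := h.2.2 (cS A S') (cS_mem A S') hne
    have heq : supp (cS A S') = supp (cS A S) := by
      by_contra hne2
      exact hnss (lt_of_le_of_ne hsub hne2)
    funext i
    apply zmod2_ne_zero
    rw [← hmem i]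
    have : (Fin.castAdd t i.1 : Fin (k+t)) ∈ supp (cS A S) := (mem_supp_cS_castAdd A).2 i.2
    rw [← heq, mem_supp_cS_castAdd] at this
    exact this
  -- hence the kernel has dimension at most 1
  have hker_le : LinearMap.ker ψ ≤ Submodule.span (ZMod 2) {(fun _ => (1 : ZMod 2) : ↥S → ZMod 2)} := by
    intro x hx
    rcases eq_or_ne x 0 with rfl | hx0
    · exact Submodule.zero_mem _
    · rw [hker x hx hx0]
      exact Submodule.subset_span rfl
  have hker_rank : Module.finrank (ZMod 2) (LinearMap.ker ψ) ≤ 1 := by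
    refine le_trans (Submodule.finrank_mono hker_le) ?_
    rcases eq_or_ne (fun _ => (1 : ZMod 2) : ↥S → ZMod 2) 0 with h1 | h1
    · rw [h1, Submodule.span_zero_singleton]
      simp
    · rw [finrank_span_singleton h1]
  have hrange_rank : Module.finrank (ZMod 2) (LinearMap.range ψ) ≤ t := by
    refine le_trans (Submodule.finrank_le _) ?_
    rw [Module.finrank_pi]
    simp
  have hrn := LinearMap.finrank_range_add_finrank_ker ψ
  rw [Module.finrank_pi] at hrn
  rw [Fintype.card_coe] at hrn
  omega


/-- For a minimal `c^S` with `|S| ≥ 2`, all `A i`, `i ∈ S`, are nonzero. -/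
lemma minimal_A_ne_zero {S : Finset (Fin k)} (h : IsMinimal (genCode A) (cS A S))
    (h2 : 2 ≤ S.card) : ∀ i ∈ S, A i ≠ 0 := by
  intro i hi hAi
  -- the codeword c^{i} has support {castAdd i} ⊊ supp (c^S)
  have hne : cS A {i} ≠ 0 := by
    rw [Ne, cS_eq_zero_iff]
    simp
  have hsub : supp (cS A {i}) ⊆ supp (cS A S) := by
    intro y hy
    refine Fin.addCases (motive := fun y => y ∈ supp (cS A {i}) → y ∈ supp (cS A S)) ?_ ?_ y hy
    · intro i' hi'
      rw [mem_supp_cS_castAdd] at hi' ⊢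
      rw [Finset.mem_singleton] at hi'
      rwa [hi']
    · intro j hj
      exfalso
      apply hj
      rw [cS_apply_natAdd, Finset.sum_singleton, hAi]
      rfl
  obtain ⟨l, hl, hli⟩ : ∃ l ∈ S, l ≠ i := by
    by_contra hcon
    push_neg at hcon
    have : S ⊆ {i} := fun x hx => Finset.mem_singleton.2 (hcon x hx)
    have := Finset.card_le_card this
    simp at this
    omega
  refine h.2.2 (cS A {i}) (cS_mem A _) hne ?_
  rw [Set.ssubset_iff_of_subset hsub]
  refine ⟨Fin.castAdd t l, (mem_supp_cS_castAdd A).2 hl, ?_⟩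
  rw [mem_supp_cS_castAdd]
  simpa using hli

/-- For a minimal `c^S` with `|S| ≥ 3`, `A` is injective on `S`. -/
lemma minimal_A_injOn {S : Finset (Fin k)} (h : IsMinimal (genCode A) (cS A S))
    (h3 : 3 ≤ S.card) : ∀ i ∈ S, ∀ j ∈ S, A i = A j → i = j := by
  intro i hi j hj hAij
  by_contra hij
  have hijS : ({i, j} : Finset (Fin k)) ⊆ S := by
    intro x hx
    rcases Finset.mem_insert.1 hx with rfl | hx
    · exact hi
    · rw [Finset.mem_singleton] at hx; rwa [hx]
  have hcard2 : ({i, j} : Finset (Fin k)).card = 2 := Finset.card_pair hij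
  have hne : cS A {i, j} ≠ 0 := by
    rw [Ne, cS_eq_zero_iff]
    simp [Finset.insert_ne_empty]
  have hsub : supp (cS A {i, j}) ⊆ supp (cS A S) := by
    intro y hy
    refine Fin.addCases (motive := fun y => y ∈ supp (cS A {i,j}) → y ∈ supp (cS A S)) ?_ ?_ y hy
    · intro i' hi'
      rw [mem_supp_cS_castAdd] at hi' ⊢
      exact hijS hi'
    · intro j' hj'
      exfalso
      apply hj'
      rw [cS_apply_natAdd, Finset.sum_insert (by simpa using hij), Finset.sum_singleton, hAij]
      exact CharTwo.add_self_eq_zero _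
  obtain ⟨l, hl⟩ : (S \ {i, j}).Nonempty := by
    rw [← Finset.card_pos, Finset.card_sdiff_of_subset hijS, hcard2]
    omega
  rw [Finset.mem_sdiff] at hl
  refine h.2.2 (cS A {i, j}) (cS_mem A _) hne ?_
  rw [Set.ssubset_iff_of_subset hsub]
  refine ⟨Fin.castAdd t l, (mem_supp_cS_castAdd A).2 hl.1, ?_⟩
  rw [mem_supp_cS_castAdd]
  exact hl.2


open Classical in
/-- Counting minimal codewords with support size `s ≥ 3`. -/
lemma count_min_le (s : ℕ) (hs : 3 ≤ s) :
    (Finset.univ.filter fun S : Finset (Fin k) =>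
        IsMinimal (genCode A) (cS A S) ∧ S.card = s).card
      ≤ ∑ T ∈ ((Finset.univ : Finset (Fin t → ZMod 2)).erase 0).powersetCard s,
          ∏ τ ∈ T, aCount A τ := by
  classical
  set Bnz := ((Finset.univ : Finset (Fin t → ZMod 2)).erase 0) with hBnz
  set Sig := (Bnz.powersetCard s).sigma
      (fun T => T.pi (fun τ => Finset.univ.filter (fun i => A i = τ))) with hSig
  have hcard : Sig.card = ∑ T ∈ Bnz.powersetCard s, ∏ τ ∈ T, aCount A τ := by
    rw [Finset.card_sigma]
    refine Finset.sum_congr rfl fun T hT => ?_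
    rw [Finset.card_pi]
    rfl
  rw [← hcard]
  apply Finset.card_le_card_of_surjOn
      (fun x : Σ T : Finset (Fin t → ZMod 2), (τ : Fin t → ZMod 2) → τ ∈ T → Fin k =>
        x.1.attach.image (fun τh => x.2 τh.1 τh.2))
  intro S hS
  simp only [Finset.coe_filter, Finset.mem_univ, true_and, Set.mem_setOf_eq] at hS
  obtain ⟨hmin, hcardS⟩ := hS
  have h2 : 2 ≤ S.card := by omega
  have hnz := minimal_A_ne_zero A hmin h2
  have hinj := minimal_A_injOn A hmin (by omega)
  have exu : ∀ τ ∈ S.image A, ∃! i, i ∈ S ∧ A i = τ := by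
    intro τ hτ
    obtain ⟨i, hi, hAi⟩ := Finset.mem_image.1 hτ
    refine ⟨i, ⟨hi, hAi⟩, ?_⟩
    rintro i' ⟨hi', hAi'⟩
    exact hinj i' hi' i hi (hAi'.trans hAi.symm)
  set T := S.image A with hT
  set f : (τ : Fin t → ZMod 2) → τ ∈ T → Fin k :=
    fun τ hτ => Finset.choose (fun i => A i = τ) S (exu τ hτ) with hf
  refine ⟨⟨T, f⟩, ?_, ?_⟩
  · simp only [Finset.mem_coe, hSig, Finset.mem_sigma]
    constructor
    · rw [Finset.mem_powersetCard]
      constructor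
      · intro τ hτ
        obtain ⟨i, hi, hAi⟩ := Finset.mem_image.1 hτ
        rw [hBnz, Finset.mem_erase]
        exact ⟨by rw [← hAi]; exact hnz i hi, Finset.mem_univ _⟩
      · rw [hT, Finset.card_image_of_injOn, hcardS]
        intro i hi j hj hij
        exact hinj i hi j hj hij
    · rw [Finset.mem_pi]
      intro τ hτ
      rw [Finset.mem_filter]
      exact ⟨Finset.mem_univ _, Finset.choose_property (fun i => A i = τ) S (exu τ hτ)⟩
  · ext i
    simp only [Finset.mem_image, Finset.mem_attach, true_and, Subtype.exists]
    constructor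
    · rintro ⟨τ, hτ, rfl⟩
      exact Finset.choose_mem (fun i => A i = τ) S (exu τ hτ)
    · intro hi
      have hmem : A i ∈ T := Finset.mem_image_of_mem A hi
      refine ⟨A i, hmem, ?_⟩
      exact ((exu (A i) hmem).unique
        ⟨Finset.choose_mem (fun i' => A i' = A i) S (exu (A i) hmem),
         Finset.choose_property (fun i' => A i' = A i) S (exu (A i) hmem)⟩ ⟨hi, rfl⟩)

lemma sum_aCount_le :
    ∑ τ ∈ ((Finset.univ : Finset (Fin t → ZMod 2)).erase 0), aCount A τ ≤ k := by
  classical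
  have htotal : ∑ τ ∈ (Finset.univ : Finset (Fin t → ZMod 2)), aCount A τ = k := by
    have := Finset.card_eq_sum_card_fiberwise
      (s := (Finset.univ : Finset (Fin k))) (t := (Finset.univ : Finset (Fin t → ZMod 2)))
      (f := A) (fun x _ => Finset.mem_univ _)
    rw [Finset.card_univ, Fintype.card_fin] at this
    simpa [aCount] using this.symm
  calc ∑ τ ∈ ((Finset.univ : Finset (Fin t → ZMod 2)).erase 0), aCount A τ
      ≤ ∑ τ ∈ (Finset.univ : Finset (Fin t → ZMod 2)), aCount A τ :=
        Finset.sum_le_sum_of_subset (Finset.erase_subset _ _)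
    _ = k := htotal

lemma card_Bnz : ((Finset.univ : Finset (Fin t → ZMod 2)).erase 0).card = 2 ^ t - 1 := by
  rw [Finset.card_erase_of_mem (Finset.mem_univ _), Finset.card_univ, Fintype.card_fun]
  simp [ZMod.card]


end Coding

open Classical in
theorem stmt15 (k t : ℕ) (A : Fin k → Fin t → ZMod 2) :
    (Mcode (genCode A) : ℝ) ≤ ((k : ℝ) + 1) * k / 2 +
      ∑ s ∈ Finset.Icc 2 (t + 1),
        (((2 ^ t - 1 : ℕ).choose s : ℝ)) * ((k : ℝ) / ((2 ^ t - 1 : ℕ) : ℝ)) ^ s := by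
  classical
  set Bnz := ((Finset.univ : Finset (Fin t → ZMod 2)).erase 0) with hBnzdef
  set Mf := Finset.univ.filter (fun S : Finset (Fin k) => IsMinimal (genCode A) (cS A S))
    with hMf
  -- `M(C)` equals the number of "minimal" subsets `S`
  have hset : {c | IsMinimal (genCode A) c}
      = cS A '' {S | IsMinimal (genCode A) (cS A S)} := by
    ext c
    constructor
    · intro hc
      obtain ⟨S, rfl⟩ := (mem_genCode_iff A c).1 hc.1
      exact ⟨S, hc, rfl⟩
    · rintro ⟨S, hS, rfl⟩
      exact hS
  have hM : Mcode (genCode A) = Mf.card := by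
    rw [Mcode, hset, Set.ncard_image_of_injective _ (cS_injective A)]
    have hMset : {S | IsMinimal (genCode A) (cS A S)} = ↑Mf := by
      ext S
      simp [hMf]
    rw [hMset, Set.ncard_coe_finset]
  -- fiberwise count by support size
  have hfiber : Mf.card
      = ∑ s ∈ Finset.Icc 1 (t + 1), (Mf.filter (fun S => S.card = s)).card := by
    apply Finset.card_eq_sum_card_fiberwise
    intro S hS
    rw [hMf, Finset.mem_coe, Finset.mem_filter] at hS
    have hmin := hS.2
    have h1 : S ≠ ∅ := by
      intro h
      apply hmin.2.1
      rw [h]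
      simp [cS]
    rw [Finset.mem_coe, Finset.mem_Icc]
    exact ⟨Finset.card_pos.2 (Finset.nonempty_iff_ne_empty.2 h1), minimal_card_le A hmin⟩
  -- trivial bounds for s = 1, 2
  have hsmall : ∀ s : ℕ, (Mf.filter (fun S => S.card = s)).card ≤ k.choose s := by
    intro s
    have hsub : Mf.filter (fun S => S.card = s) ⊆ Finset.univ.powersetCard s := by
      intro S hS
      rw [Finset.mem_filter] at hS
      rw [Finset.mem_powersetCard]
      exact ⟨Finset.subset_univ _, hS.2⟩
    refine le_trans (Finset.card_le_card hsub) ?_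
    rw [Finset.card_powersetCard, Finset.card_univ, Fintype.card_fin]
  -- bound for s ≥ 3
  have hbig : ∀ s ∈ Finset.Icc 3 (t + 1), (Mf.filter (fun S => S.card = s)).card
      ≤ ∑ T ∈ Bnz.powersetCard s, ∏ τ ∈ T, aCount A τ := by
    intro s hs
    rw [Finset.mem_Icc] at hs
    refine le_trans (Finset.card_le_card ?_) (count_min_le A s hs.1)
    intro S hS
    simp only [hMf, Finset.mem_filter, Finset.mem_univ, true_and] at hS ⊢
    exact hS
  -- the natural-number bound
  have hnat : Mf.card ≤ k.choose 1 + (k.choose 2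
      + ∑ s ∈ Finset.Icc 3 (t + 1), ∑ T ∈ Bnz.powersetCard s, ∏ τ ∈ T, aCount A τ) := by
    rw [hfiber]
    have hsub : Finset.Icc 1 (t + 1) ⊆ insert 1 (insert 2 (Finset.Icc 3 (t + 1))) := by
      intro x hx
      rw [Finset.mem_Icc] at hx
      simp only [Finset.mem_insert, Finset.mem_Icc]
      omega
    refine le_trans (Finset.sum_le_sum_of_subset hsub) ?_
    rw [Finset.sum_insert (by simp [Finset.mem_Icc]), Finset.sum_insert (by simp [Finset.mem_Icc])]
    refine Nat.add_le_add (hsmall 1) (Nat.add_le_add (hsmall 2) ?_)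
    exact Finset.sum_le_sum hbig
  -- move to the reals
  have hreal : (Mcode (genCode A) : ℝ) ≤ (k.choose 1 : ℝ) + ((k.choose 2 : ℝ)
      + ∑ s ∈ Finset.Icc 3 (t + 1),
          ∑ T ∈ Bnz.powersetCard s, ∏ τ ∈ T, (aCount A τ : ℝ)) := by
    rw [hM]
    have := (Nat.cast_le (α := ℝ)).2 hnat
    push_cast at this
    exact this
  -- Maclaurin bound for each term
  have hNcard : Bnz.card = 2 ^ t - 1 := card_Bnz
  have hterm : ∀ s ∈ Finset.Icc 3 (t + 1),
      ∑ T ∈ Bnz.powersetCard s, ∏ τ ∈ T, (aCount A τ : ℝ)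
        ≤ (((2 ^ t - 1 : ℕ).choose s : ℝ)) * ((k : ℝ) / ((2 ^ t - 1 : ℕ) : ℝ)) ^ s := by
    intro s _
    have := maclaurin Bnz (fun τ => (aCount A τ : ℝ))
      (fun τ _ => Nat.cast_nonneg _) (k : ℝ)
      (by exact_mod_cast sum_aCount_le A) s
    rw [esym, hNcard] at this
    exact this
  have hsum23 : ∑ s ∈ Finset.Icc 3 (t + 1),
      (((2 ^ t - 1 : ℕ).choose s : ℝ)) * ((k : ℝ) / ((2 ^ t - 1 : ℕ) : ℝ)) ^ s
      ≤ ∑ s ∈ Finset.Icc 2 (t + 1),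
          (((2 ^ t - 1 : ℕ).choose s : ℝ)) * ((k : ℝ) / ((2 ^ t - 1 : ℕ) : ℝ)) ^ s := by
    refine Finset.sum_le_sum_of_subset_of_nonneg
      (Finset.Icc_subset_Icc_left (by omega)) ?_
    intro i _ _
    positivity
  have hchoose : (k.choose 1 : ℝ) + (k.choose 2 : ℝ) = ((k : ℝ) + 1) * k / 2 := by
    rw [Nat.choose_one_right, Nat.cast_choose_two]
    push_cast
    ring
  calc (Mcode (genCode A) : ℝ)
      ≤ (k.choose 1 : ℝ) + ((k.choose 2 : ℝ)
        + ∑ s ∈ Finset.Icc 3 (t + 1),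
            ∑ T ∈ Bnz.powersetCard s, ∏ τ ∈ T, (aCount A τ : ℝ)) := hreal
    _ ≤ (k.choose 1 : ℝ) + ((k.choose 2 : ℝ)
        + ∑ s ∈ Finset.Icc 3 (t + 1),
            (((2 ^ t - 1 : ℕ).choose s : ℝ)) * ((k : ℝ) / ((2 ^ t - 1 : ℕ) : ℝ)) ^ s) := by
          refine add_le_add le_rfl (add_le_add le_rfl ?_)
          exact Finset.sum_le_sum hterm
    _ ≤ (k.choose 1 : ℝ) + ((k.choose 2 : ℝ)
        + ∑ s ∈ Finset.Icc 2 (t + 1),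
            (((2 ^ t - 1 : ℕ).choose s : ℝ)) * ((k : ℝ) / ((2 ^ t - 1 : ℕ) : ℝ)) ^ s) := by
          exact add_le_add le_rfl (add_le_add le_rfl hsum23)
    _ = ((k : ℝ) + 1) * k / 2 +
        ∑ s ∈ Finset.Icc 2 (t + 1),
            (((2 ^ t - 1 : ℕ).choose s : ℝ)) * ((k : ℝ) / ((2 ^ t - 1 : ℕ) : ℝ)) ^ s := by
          rw [← hchoose]
          ring
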